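/- (Decomposition Theorem, vanishing-entries form.) Let 0 ≤ k ≤ t, let y ∈ Las_t(K), and let S ⊆ [n] be such that y_I = 0 for every index set I (with |I| ≤ 2t+2) satisfying |I ∩ S| > k. Then there exist finitely many vectors w^{(1)}, …, w^{(N)} ∈ Las_{t−k}(K) with w^{(j)}_{\{i\}} ∈ {0,1} for all i ∈ S and all j, and coefficients λ_1, …, λ_N ≥ 0 with Σ_j λ_j = 1, such that y_J = Σ_j λ_j · w^{(j)}_J for every J with |J| ≤ 2(t−k)+2. -/

import Mathlib

open Finset

/-- Membership in the polyhedron `K = {x : A x ≥ b}`. -/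
def memK {n m : ℕ} (A : Matrix (Fin m) (Fin n) ℝ) (b : Fin m → ℝ) (x : Fin n → ℝ) : Prop :=
  ∀ ℓ : Fin m, b ℓ ≤ ∑ i, A ℓ i * x i

/-- The moment matrix of a vector `y` indexed by subsets, truncated at sets of size `≤ t`. -/
def momentMatrix {α : Type*} [Fintype α] [DecidableEq α] (y : Finset α → ℝ) (t : ℕ) :
    Matrix {I : Finset α // I.card ≤ t} {I : Finset α // I.card ≤ t} ℝ :=
  fun I J => y (I.1 ∪ J.1)

/-- The shift operator `(a;β) * y` for a linear constraint `aᵀx ≥ β`. -/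
def shiftVec {α ι : Type*} [Fintype α] [DecidableEq α]
    (A : ι → α → ℝ) (b : ι → ℝ) (ℓ : ι) (y : Finset α → ℝ) : Finset α → ℝ :=
  fun I => (∑ i, A ℓ i * y (insert i I)) - b ℓ * y I

/-- `y ∈ Las_t(K)` where `K = {x : A x ≥ b}`: `y_∅ = 1`, the moment matrix truncated at
sets of size `≤ t+1` is PSD, and each shifted moment matrix truncated at sets of size
`≤ t` is PSD. -/
def IsLasserre {α ι : Type*} [Fintype α] [DecidableEq α]
    (A : ι → α → ℝ) (b : ι → ℝ) (t : ℕ) (y : Finset α → ℝ) : Prop :=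
  y ∅ = 1 ∧ (momentMatrix y (t + 1)).PosSemidef ∧
    ∀ ℓ : ι, (momentMatrix (shiftVec A b ℓ y) t).PosSemidef


namespace LasDecomp

open Matrix

variable {α : Type*} [Fintype α] [DecidableEq α]

lemma alt0 (W : Finset α) : ∑ U ∈ W.powerset, (-1:ℝ)^U.card = if W = ∅ then 1 else 0 := by
  have h := Finset.sum_powerset_neg_one_pow_card (x := W)
  have h2 := congrArg (fun z : ℤ => (z : ℝ)) h
  push_cast at h2
  simpa using h2

lemma sum_powerset_union_disjoint {s t : Finset α} (h : Disjoint s t) (f : Finset α → ℝ) :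
    ∑ u ∈ (s ∪ t).powerset, f u = ∑ a ∈ s.powerset, ∑ b ∈ t.powerset, f (a ∪ b) := by
  rw [← Finset.sum_product']
  refine Finset.sum_nbij' (fun u => (u ∩ s, u ∩ t)) (fun p => p.1 ∪ p.2) ?_ ?_ ?_ ?_ ?_
  · intro u hu
    simp only [Finset.mem_product, mem_powerset]
    exact ⟨inter_subset_right, inter_subset_right⟩
  · intro p hp
    simp only [Finset.mem_product, mem_powerset] at hp
    exact mem_powerset.2 (union_subset (hp.1.trans subset_union_left)
      (hp.2.trans subset_union_right))
  · intro u hu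
    rw [mem_powerset] at hu
    show (u ∩ s) ∪ (u ∩ t) = u
    ext x
    simp only [mem_union, mem_inter]
    constructor
    · rintro (⟨hx, _⟩ | ⟨hx, _⟩) <;> exact hx
    · intro hx
      rcases mem_union.1 (hu hx) with hxs | hxt
      · exact Or.inl ⟨hx, hxs⟩
      · exact Or.inr ⟨hx, hxt⟩
  · rintro ⟨p1, p2⟩ hp
    simp only [Finset.mem_product, mem_powerset] at hp
    show ((p1 ∪ p2) ∩ s, (p1 ∪ p2) ∩ t) = (p1, p2)
    have h1 : (p1 ∪ p2) ∩ s = p1 := by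
      ext x
      simp only [mem_inter, mem_union]
      constructor
      · rintro ⟨hx | hx, hxs⟩
        · exact hx
        · exact absurd hxs (disjoint_right.1 h (hp.2 hx))
      · intro hx
        exact ⟨Or.inl hx, hp.1 hx⟩
    have h2 : (p1 ∪ p2) ∩ t = p2 := by
      ext x
      simp only [mem_inter, mem_union]
      constructor
      · rintro ⟨hx | hx, hxt⟩
        · exact absurd hxt (disjoint_left.1 h (hp.1 hx))
        · exact hx
      · intro hx
        exact ⟨Or.inr hx, hp.2 hx⟩
    rw [h1, h2]
  · intro u hu
    rw [mem_powerset] at hu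
    show f u = f ((u ∩ s) ∪ (u ∩ t))
    congr 1
    ext x
    simp only [mem_union, mem_inter]
    constructor
    · intro hx
      rcases mem_union.1 (hu hx) with hxs | hxt
      · exact Or.inl ⟨hx, hxs⟩
      · exact Or.inr ⟨hx, hxt⟩
    · rintro (⟨hx, _⟩ | ⟨hx, _⟩) <;> exact hx

lemma double_alt (V : Finset α) (f : Finset α → ℝ) :
    ∑ R ∈ V.powerset, ∑ R' ∈ V.powerset, (-1:ℝ)^(R.card + R'.card) * f (R ∪ R')
      = ∑ U ∈ V.powerset, (-1:ℝ)^U.card * f U := by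
  have key : ∀ R ∈ V.powerset, (∑ R' ∈ V.powerset, (-1:ℝ)^(R.card + R'.card) * f (R ∪ R'))
      = if R = ∅ then ∑ U ∈ V.powerset, (-1:ℝ)^U.card * f U else 0 := by
    intro R hR
    rw [mem_powerset] at hR
    have hV : R ∪ (V \ R) = V := union_sdiff_of_subset hR
    have hdisj : Disjoint R (V \ R) := disjoint_sdiff
    conv_lhs => rw [← hV]
    rw [sum_powerset_union_disjoint hdisj]
    have hterm : ∀ a ∈ R.powerset, ∀ b ∈ (V \ R).powerset,
        (-1:ℝ)^(R.card + (a ∪ b).card) * f (R ∪ (a ∪ b))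
          = (-1:ℝ)^a.card * ((-1:ℝ)^(R.card + b.card) * f (R ∪ b)) := by
      intro a ha b hb
      rw [mem_powerset] at ha hb
      have hab : Disjoint a b := hdisj.mono ha hb
      have h1 : (a ∪ b).card = a.card + b.card := card_union_of_disjoint hab
      have h2 : R ∪ (a ∪ b) = R ∪ b := by
        rw [← union_assoc, union_eq_left.2 ha]
      rw [h1, h2]
      ring
    calc ∑ a ∈ R.powerset, ∑ b ∈ (V \ R).powerset,
          (-1:ℝ)^(R.card + (a ∪ b).card) * f (R ∪ (a ∪ b))
        = ∑ a ∈ R.powerset, (-1:ℝ)^a.card *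
            (∑ b ∈ (V \ R).powerset, (-1:ℝ)^(R.card + b.card) * f (R ∪ b)) := by
          refine sum_congr rfl fun a ha => ?_
          rw [mul_sum]
          exact sum_congr rfl fun b hb => hterm a ha b hb
      _ = (∑ a ∈ R.powerset, (-1:ℝ)^a.card) *
            (∑ b ∈ (V \ R).powerset, (-1:ℝ)^(R.card + b.card) * f (R ∪ b)) := by
          rw [sum_mul]
      _ = _ := by
          rw [alt0]
          by_cases hRe : R = ∅
          · subst hRe
            simp
          · simp [hRe]
  rw [sum_congr rfl key, Finset.sum_ite_eq' V.powerset ∅ _]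
  simp

lemma psd_diag_nonneg {N : Type*} [Fintype N] {M : Matrix N N ℝ} (hM : M.PosSemidef) (i : N) : 0 ≤ M i i := by
  exact hM.diag_nonneg

lemma psd_entry_zero {N : Type*} [Fintype N] {M : Matrix N N ℝ} (hM : M.PosSemidef) {i j : N}
    (hi : M i i = 0) : M i j = 0 := by
  classical
  have hx : star (Pi.single i (1:ℝ)) ⬝ᵥ M *ᵥ Pi.single i 1 = 0 := by
    simpa [Matrix.mulVec_single, dotProduct_single] using hi
  have h2 := congrFun ((hM.dotProduct_mulVec_zero_iff _).1 hx) j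
  have h3 : M j i = 0 := by simpa [Matrix.mulVec_single] using h2
  have h4 := hM.1.apply i j
  rw [h3, star_zero] at h4
  exact h4.symm

lemma psd_smul {N : Type*} [Fintype N] {M : Matrix N N ℝ} (hM : M.PosSemidef) {c : ℝ} (hc : 0 ≤ c) :
    (c • M).PosSemidef := by
  exact hM.smul hc


/-- The conditioning vector `z^T`. -/
def condVec (S T : Finset α) (f : Finset α → ℝ) : Finset α → ℝ :=
  fun I => ∑ U ∈ (S \ T).powerset, (-1:ℝ)^U.card * f (I ∪ T ∪ U)

lemma condVec_sum (S : Finset α) (f : Finset α → ℝ) (I : Finset α) :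
    ∑ T ∈ S.powerset, condVec S T f I = f I := by
  unfold condVec
  rw [Finset.sum_sigma']
  have hstep : ∑ p ∈ S.powerset.sigma (fun T => (S \ T).powerset),
        (-1:ℝ)^p.2.card * f (I ∪ p.1 ∪ p.2)
      = ∑ p ∈ S.powerset.sigma (fun W => W.powerset),
        (-1:ℝ)^(p.1 \ p.2).card * f (I ∪ p.1) := by
    refine Finset.sum_nbij' (fun p => ⟨p.1 ∪ p.2, p.1⟩) (fun p => ⟨p.2, p.1 \ p.2⟩)
      ?_ ?_ ?_ ?_ ?_
    · rintro ⟨T, U⟩ hp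
      simp only [Finset.mem_sigma, mem_powerset] at hp ⊢
      exact ⟨union_subset hp.1 ((hp.2.trans (sdiff_subset))), subset_union_left⟩
    · rintro ⟨W, T⟩ hp
      simp only [Finset.mem_sigma, mem_powerset] at hp ⊢
      refine ⟨hp.2.trans hp.1, ?_⟩
      exact sdiff_subset_sdiff hp.1 le_rfl
    · rintro ⟨T, U⟩ hp
      simp only [Finset.mem_sigma, mem_powerset] at hp
      have hd : Disjoint T U := by
        have := hp.2
        exact Finset.disjoint_of_subset_right this sdiff_disjoint.symm
      simp only [Sigma.mk.inj_iff, heq_eq_eq]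
      exact ⟨trivial, union_sdiff_cancel_left hd⟩
    · rintro ⟨W, T⟩ hp
      simp only [Finset.mem_sigma, mem_powerset] at hp
      simp only [Sigma.mk.inj_iff, heq_eq_eq]
      exact ⟨union_sdiff_of_subset hp.2, trivial⟩
    · rintro ⟨T, U⟩ hp
      simp only [Finset.mem_sigma, mem_powerset] at hp
      have hd : Disjoint T U :=
        Finset.disjoint_of_subset_right hp.2 sdiff_disjoint.symm
      have h1 : (T ∪ U) \ T = U := union_sdiff_cancel_left hd
      rw [h1, union_assoc]
  rw [hstep, Finset.sum_sigma]
  have hinner : ∀ W ∈ S.powerset,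
      (∑ T ∈ W.powerset, (-1:ℝ)^(W \ T).card * f (I ∪ W))
        = (if W = ∅ then 1 else 0) * f (I ∪ W) := by
    intro W _
    rw [← sum_mul]
    congr 1
    rw [← alt0 W]
    refine Finset.sum_nbij' (fun T => W \ T) (fun T => W \ T) ?_ ?_ ?_ ?_ ?_ <;>
      intro T hT <;> simp only [mem_powerset] at *
    · exact sdiff_subset
    · exact sdiff_subset
    · exact Finset.sdiff_sdiff_eq_self hT
    · exact Finset.sdiff_sdiff_eq_self hT
  rw [sum_congr rfl hinner]
  rw [Finset.sum_eq_single ∅ (by intro W _ hW; simp [hW]) (by simp)]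
  simp

lemma condVec_zero (S T : Finset α) (f : Finset α → ℝ) {k : ℕ}
    (hvan : ∀ W, k < (W ∩ S).card → f W = 0) (hTS : T ⊆ S) (hTk : k < T.card)
    (I : Finset α) : condVec S T f I = 0 := by
  unfold condVec
  refine Finset.sum_eq_zero fun U hU => ?_
  rw [hvan _ ?_, mul_zero]
  calc k < T.card := hTk
    _ ≤ ((I ∪ T ∪ U) ∩ S).card := by
        apply card_le_card
        intro x hx
        exact mem_inter.2 ⟨mem_union_left _ (mem_union_right _ hx), hTS hx⟩

lemma condVec_single_mem (S T : Finset α) (f : Finset α → ℝ) {i : α} (hi : i ∈ T) :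
    condVec S T f {i} = condVec S T f ∅ := by
  unfold condVec
  refine Finset.sum_congr rfl fun U _ => ?_
  congr 2
  rw [empty_union, union_eq_right.2 (singleton_subset_iff.2 hi)]

lemma condVec_single_not_mem (S T : Finset α) (f : Finset α → ℝ) {i : α}
    (hi : i ∈ S \ T) : condVec S T f {i} = 0 := by
  unfold condVec
  have hV : S \ T = insert i ((S \ T).erase i) := (insert_erase hi).symm
  have hni : i ∉ (S \ T).erase i := notMem_erase _ _
  rw [hV, Finset.sum_powerset_insert hni, ← Finset.sum_add_distrib]
  refine Finset.sum_eq_zero fun U hU => ?_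
  rw [mem_powerset] at hU
  have hiU : i ∉ U := fun h => hni (hU h)
  have hcard : (insert i U).card = U.card + 1 := card_insert_of_notMem hiU
  have hset : {i} ∪ T ∪ insert i U = {i} ∪ T ∪ U := by
    ext x
    simp only [mem_union, mem_insert, mem_singleton]
    tauto
  rw [hcard, hset, pow_succ]
  ring

lemma shiftVec_vanish {ι : Type*} (A : ι → α → ℝ) (b : ι → ℝ) (ℓ : ι)
    {S : Finset α} {k : ℕ} {f : Finset α → ℝ}
    (hvan : ∀ W, k < (W ∩ S).card → f W = 0) :
    ∀ W, k < (W ∩ S).card → shiftVec A b ℓ f W = 0 := by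
  intro W hW
  unfold shiftVec
  rw [hvan W hW, mul_zero, sub_zero]
  refine Finset.sum_eq_zero fun i _ => ?_
  rw [hvan (insert i W) ?_, mul_zero]
  calc k < (W ∩ S).card := hW
    _ ≤ ((insert i W) ∩ S).card :=
        card_le_card (inter_subset_inter (subset_insert _ _) le_rfl)

lemma condVec_shift {ι : Type*} (A : ι → α → ℝ) (b : ι → ℝ) (ℓ : ι)
    (S T : Finset α) (f : Finset α → ℝ) :
    shiftVec A b ℓ (condVec S T f) = condVec S T (shiftVec A b ℓ f) := by
  funext I
  unfold shiftVec condVec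
  have hset : ∀ (i : α) (U : Finset α), insert i I ∪ T ∪ U = insert i (I ∪ T ∪ U) := by
    intro i U
    simp [Finset.insert_union]
  simp only [mul_sub, Finset.mul_sum, Finset.sum_sub_distrib]
  rw [Finset.sum_comm]
  congr 1
  · refine Finset.sum_congr rfl fun U _ => Finset.sum_congr rfl fun i _ => ?_
    rw [hset]
    ring
  · refine Finset.sum_congr rfl fun U _ => ?_
    ring
lemma lift_card_le {S T : Finset α} {d k : ℕ} (hTk : T.card ≤ k) {I R : Finset α}
    (hI : I.card ≤ d) (hR : R ∈ (S \ T).powerset.filter fun R => R.card ≤ k - T.card) :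
    (I ∪ T ∪ R).card ≤ d + k := by
  simp only [mem_filter, mem_powerset] at hR
  have h1 : (I ∪ T ∪ R).card ≤ (I ∪ T).card + R.card := card_union_le _ _
  have h2 : (I ∪ T).card ≤ I.card + T.card := card_union_le _ _
  omega

noncomputable def Pmat (S T : Finset α) (d k : ℕ) :
    Matrix {I : Finset α // I.card ≤ d + k} {I : Finset α // I.card ≤ d} ℝ :=
  fun I' I => ∑ R ∈ ((S \ T).powerset.filter fun R => R.card ≤ k - T.card).attach.filter
      (fun R => I.1 ∪ T ∪ R.1 = I'.1), (-1:ℝ)^R.1.card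

lemma sum_Pmat {S T : Finset α} {d k : ℕ} (hTk : T.card ≤ k)
    (I : {I : Finset α // I.card ≤ d}) (G : {I : Finset α // I.card ≤ d + k} → ℝ) :
    ∑ I' : {I : Finset α // I.card ≤ d + k}, Pmat S T d k I' I * G I'
      = ∑ R ∈ ((S \ T).powerset.filter fun R => R.card ≤ k - T.card).attach,
          (-1:ℝ)^R.1.card * G ⟨I.1 ∪ T ∪ R.1, lift_card_le hTk I.2 R.2⟩ := by
  classical
  rw [← Finset.sum_fiberwise (((S \ T).powerset.filter fun R => R.card ≤ k - T.card).attach)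
      (fun R => (⟨I.1 ∪ T ∪ R.1, lift_card_le hTk I.2 R.2⟩ :
        {I : Finset α // I.card ≤ d + k}))
      (fun R => (-1:ℝ)^R.1.card * G ⟨I.1 ∪ T ∪ R.1, lift_card_le hTk I.2 R.2⟩)]
  refine Finset.sum_congr rfl fun I' _ => ?_
  have hfil : (((S \ T).powerset.filter fun R => R.card ≤ k - T.card).attach.filter
        (fun R => (⟨I.1 ∪ T ∪ R.1, lift_card_le hTk I.2 R.2⟩ :
          {I : Finset α // I.card ≤ d + k}) = I'))
      = (((S \ T).powerset.filter fun R => R.card ≤ k - T.card).attach.filter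
        (fun R => I.1 ∪ T ∪ R.1 = I'.1)) := by
    refine Finset.filter_congr fun R _ => ?_
    simp [Subtype.ext_iff]
  calc Pmat S T d k I' I * G I'
      = (∑ R ∈ ((S \ T).powerset.filter fun R => R.card ≤ k - T.card).attach.filter
          (fun R => I.1 ∪ T ∪ R.1 = I'.1), (-1:ℝ)^R.1.card) * G I' := rfl
    _ = ∑ R ∈ ((S \ T).powerset.filter fun R => R.card ≤ k - T.card).attach.filter
          (fun R => I.1 ∪ T ∪ R.1 = I'.1), (-1:ℝ)^R.1.card * G I' := by rw [sum_mul]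
    _ = _ := by
        rw [hfil]
        refine (Finset.sum_congr rfl fun R hR => ?_).symm
        have h2 := (Finset.mem_filter.1 hR).2
        have h3 : (⟨I.1 ∪ T ∪ R.1, lift_card_le hTk I.2 R.2⟩ :
            {I : Finset α // I.card ≤ d + k}) = I' := Subtype.ext h2
        rw [h3]

lemma attach_double (s0 : Finset (Finset α)) (g : Finset α → Finset α → ℝ) :
    ∑ R' ∈ s0.attach, ∑ R ∈ s0.attach, g R'.1 R.1 = ∑ R' ∈ s0, ∑ R ∈ s0, g R' R := by
  calc ∑ R' ∈ s0.attach, ∑ R ∈ s0.attach, g R'.1 R.1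
      = ∑ R' ∈ s0, ∑ R ∈ s0.attach, g R' R.1 :=
        Finset.sum_attach s0 (fun x => ∑ R ∈ s0.attach, g x R.1)
    _ = ∑ R' ∈ s0, ∑ R ∈ s0, g R' R :=
        Finset.sum_congr rfl fun R' _ => Finset.sum_attach s0 (fun x => g R' x)

lemma condVec_moment_psd (S T : Finset α) (hTS : T ⊆ S) {k : ℕ} (hTk : T.card ≤ k) (d : ℕ)
    (f : Finset α → ℝ) (hvan : ∀ W, k < (W ∩ S).card → f W = 0)
    (hf : (momentMatrix f (d + k)).PosSemidef) :
    (momentMatrix (condVec S T f) d).PosSemidef := by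
  classical
  have hvan' : ∀ (X R : Finset α), R ⊆ S \ T → k - T.card < R.card → R ⊆ X → T ⊆ X →
      f X = 0 := by
    intro X R hRS hRc hRX hTX
    apply hvan
    have hd : Disjoint T R := Finset.disjoint_of_subset_right hRS sdiff_disjoint.symm
    have hsub : T ∪ R ⊆ X ∩ S := by
      intro x hx
      rcases mem_union.1 hx with hx | hx
      · exact mem_inter.2 ⟨hTX hx, hTS hx⟩
      · exact mem_inter.2 ⟨hRX hx, (mem_sdiff.1 (hRS hx)).1⟩
    have hc : (T ∪ R).card = T.card + R.card := card_union_of_disjoint hd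
    have := card_le_card hsub
    omega
  have key : momentMatrix (condVec S T f) d
      = (Pmat S T d k)ᴴ * momentMatrix f (d + k) * Pmat S T d k := by
    ext I J
    show condVec S T f (I.1 ∪ J.1) = _
    rw [Matrix.mul_apply]
    simp only [Matrix.mul_apply, Matrix.conjTranspose_apply, star_trivial]
    have hswap : ∀ J' : {I : Finset α // I.card ≤ d + k},
        (∑ I' : {I : Finset α // I.card ≤ d + k},
          Pmat S T d k I' I * momentMatrix f (d + k) I' J') * Pmat S T d k J' J
        = Pmat S T d k J' J * (∑ I' : {I : Finset α // I.card ≤ d + k},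
            Pmat S T d k I' I * momentMatrix f (d + k) I' J') := fun _ => mul_comm _ _
    rw [Finset.sum_congr rfl fun J' _ => hswap J']
    rw [sum_Pmat hTk J]
    have hset : ∀ R R' : Finset α, (I.1 ∪ T ∪ R) ∪ (J.1 ∪ T ∪ R') =
        (I.1 ∪ J.1) ∪ T ∪ (R' ∪ R) := by
      intro R R'
      ext x
      simp only [mem_union]
      tauto
    have hinner : ∀ R' ∈ ((S \ T).powerset.filter
          fun R : Finset α => R.card ≤ k - T.card).attach,
        (-1:ℝ)^R'.1.card * (∑ I' : {I : Finset α // I.card ≤ d + k},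
            Pmat S T d k I' I * momentMatrix f (d + k) I' ⟨J.1 ∪ T ∪ R'.1,
              lift_card_le hTk J.2 R'.2⟩)
        = ∑ R ∈ ((S \ T).powerset.filter fun R : Finset α => R.card ≤ k - T.card).attach,
            (-1:ℝ)^(R'.1.card + R.1.card) * f ((I.1 ∪ J.1) ∪ T ∪ (R'.1 ∪ R.1)) := by
      intro R' _
      rw [sum_Pmat hTk I, Finset.mul_sum]
      refine Finset.sum_congr rfl fun R _ => ?_
      show (-1:ℝ)^R'.1.card * ((-1:ℝ)^R.1.card *
        f ((I.1 ∪ T ∪ R.1) ∪ (J.1 ∪ T ∪ R'.1))) = _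
      rw [hset, pow_add]
      ring
    rw [Finset.sum_congr rfl hinner]
    rw [attach_double ((S \ T).powerset.filter fun R : Finset α => R.card ≤ k - T.card)
      (fun R' R => (-1:ℝ)^(R'.card + R.card) * f ((I.1 ∪ J.1) ∪ T ∪ (R' ∪ R)))]
    -- extend the filtered sums to the whole powerset
    have hz1 : ∀ (R' R : Finset α), R' ∈ (S \ T).powerset → k - T.card < R'.card →
        (-1:ℝ)^(R'.card + R.card) * f ((I.1 ∪ J.1) ∪ T ∪ (R' ∪ R)) = 0 := by
      intro R' R h hlt
      rw [hvan' _ R' (mem_powerset.1 h) hlt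
        (subset_union_left.trans subset_union_right)
        (subset_union_right.trans subset_union_left), mul_zero]
    have hz2 : ∀ (R' R : Finset α), R ∈ (S \ T).powerset → k - T.card < R.card →
        (-1:ℝ)^(R'.card + R.card) * f ((I.1 ∪ J.1) ∪ T ∪ (R' ∪ R)) = 0 := by
      intro R' R h hlt
      rw [hvan' _ R (mem_powerset.1 h) hlt
        (subset_union_right.trans subset_union_right)
        (subset_union_right.trans subset_union_left), mul_zero]
    have houter : ∑ R' ∈ ((S \ T).powerset.filter
          fun R : Finset α => R.card ≤ k - T.card),
        ∑ R ∈ ((S \ T).powerset.filter fun R : Finset α => R.card ≤ k - T.card),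
          (-1:ℝ)^(R'.card + R.card) * f ((I.1 ∪ J.1) ∪ T ∪ (R' ∪ R))
        = ∑ R' ∈ (S \ T).powerset, ∑ R ∈ (S \ T).powerset,
            (-1:ℝ)^(R'.card + R.card) * f ((I.1 ∪ J.1) ∪ T ∪ (R' ∪ R)) := by
      calc ∑ R' ∈ ((S \ T).powerset.filter fun R : Finset α => R.card ≤ k - T.card),
            ∑ R ∈ ((S \ T).powerset.filter fun R : Finset α => R.card ≤ k - T.card),
              (-1:ℝ)^(R'.card + R.card) * f ((I.1 ∪ J.1) ∪ T ∪ (R' ∪ R))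
          = ∑ R' ∈ ((S \ T).powerset.filter fun R : Finset α => R.card ≤ k - T.card),
              ∑ R ∈ (S \ T).powerset,
                (-1:ℝ)^(R'.card + R.card) * f ((I.1 ∪ J.1) ∪ T ∪ (R' ∪ R)) := by
            refine Finset.sum_congr rfl fun R' _ => ?_
            refine Finset.sum_subset (Finset.filter_subset _ _) ?_
            intro R hR hRn
            have hc : ¬ R.card ≤ k - T.card := fun hc => hRn (mem_filter.2 ⟨hR, hc⟩)
            exact hz2 R' R hR (lt_of_not_ge hc)
        _ = _ := by
            refine Finset.sum_subset (Finset.filter_subset _ _) ?_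
            intro R' hR' hRn
            have hc : ¬ R'.card ≤ k - T.card := fun hc => hRn (mem_filter.2 ⟨hR', hc⟩)
            exact Finset.sum_eq_zero fun R _ => hz1 R' R hR' (lt_of_not_ge hc)
    rw [houter]
    exact (double_alt (S \ T) (fun U => f ((I.1 ∪ J.1) ∪ T ∪ U))).symm
  rw [key]
  exact hf.conjTranspose_mul_mul_same _

lemma moment_vanish (z : Finset α → ℝ) (d : ℕ) (h : (momentMatrix z d).PosSemidef)
    (h0 : z ∅ = 0) : ∀ J : Finset α, J.card ≤ 2 * d → z J = 0 := by
  have he : ((∅ : Finset α).card ≤ d) := by simp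
  have hrow : ∀ I : {I : Finset α // I.card ≤ d}, z I.1 = 0 := by
    intro I
    have h00 : momentMatrix z d ⟨∅, he⟩ ⟨∅, he⟩ = 0 := by
      show z (∅ ∪ ∅) = 0
      simpa using h0
    have h01 := psd_entry_zero h h00 (j := I)
    show z I.1 = 0
    calc z I.1 = momentMatrix z d ⟨∅, he⟩ I := by
          show z I.1 = z (∅ ∪ I.1)
          rw [empty_union]
      _ = 0 := h01
  intro J hJ
  have hmin : min d J.card ≤ J.card := min_le_right _ _
  obtain ⟨J₁, hsub, hcard⟩ := Finset.exists_subset_card_eq hmin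
  have h1 : J₁.card ≤ d := by rw [hcard]; exact min_le_left _ _
  have h2 : (J \ J₁).card ≤ d := by
    rw [card_sdiff_of_subset hsub, hcard]
    rcases le_total d J.card with hle | hle
    · rw [min_eq_left hle]; omega
    · rw [min_eq_right hle]; omega
  have hd1 : momentMatrix z d ⟨J₁, h1⟩ ⟨J₁, h1⟩ = 0 := by
    show z (J₁ ∪ J₁) = 0
    rw [union_self]
    exact hrow ⟨J₁, h1⟩
  have h3 := psd_entry_zero h hd1 (j := ⟨J \ J₁, h2⟩)
  calc z J = z (J₁ ∪ (J \ J₁)) := by rw [union_sdiff_of_subset hsub]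
    _ = 0 := h3

lemma momentMatrix_smul (c : ℝ) (z : Finset α → ℝ) (d : ℕ) :
    momentMatrix (fun I => c * z I) d = c • momentMatrix z d := rfl

lemma shiftVec_smul {ι : Type*} (A : ι → α → ℝ) (b : ι → ℝ) (ℓ : ι) (c : ℝ)
    (z : Finset α → ℝ) :
    shiftVec A b ℓ (fun I => c * z I) = fun I => c * shiftVec A b ℓ z I := by
  funext I
  unfold shiftVec
  rw [mul_sub, Finset.mul_sum]
  congr 1
  · exact Finset.sum_congr rfl fun i _ => by ring
  · ring

end LasDecomp

/-- Decomposition Theorem (vanishing-entries form): if `y ∈ Las_t(K)`, `0 ≤ k ≤ t`, and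
`y_I = 0` whenever `|I| ≤ 2t+2` and `|I ∩ S| > k`, then the truncation of `y` is a convex
combination of level-`(t-k)` Lasserre solutions integral on `S`. -/
theorem lasserre_decomposition_vanishing (n m t k : ℕ) (hk : k ≤ t)
    (A : Matrix (Fin m) (Fin n) ℝ) (b : Fin m → ℝ)
    (y : Finset (Fin n) → ℝ) (hy : IsLasserre (fun ℓ i => A ℓ i) b t y)
    (S : Finset (Fin n))
    (hvanish : ∀ I : Finset (Fin n), I.card ≤ 2 * t + 2 → k < (I ∩ S).card → y I = 0) :
    ∃ (N : ℕ) (lam : Fin N → ℝ) (w : Fin N → Finset (Fin n) → ℝ),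
      (∀ j, IsLasserre (fun ℓ i => A ℓ i) b (t - k) (w j)) ∧
      (∀ j, ∀ i ∈ S, w j {i} = 0 ∨ w j {i} = 1) ∧
      (∀ j, 0 ≤ lam j) ∧ (∑ j, lam j = 1) ∧
      (∀ J : Finset (Fin n), J.card ≤ 2 * (t - k) + 2 →
        y J = ∑ j, lam j * w j J) := by
  classical
  open LasDecomp in
  obtain ⟨hy0, hyM, hyS⟩ := hy
  set yh : Finset (Fin n) → ℝ := fun I => if (I ∩ S).card ≤ k then y I else 0 with hyh
  have hvanG : ∀ W, k < (W ∩ S).card → yh W = 0 := by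
    intro W hW
    simp only [hyh]
    rw [if_neg (not_le.2 hW)]
  have heq : ∀ I : Finset (Fin n), I.card ≤ 2 * t + 2 → yh I = y I := by
    intro I hI
    by_cases h : (I ∩ S).card ≤ k
    · simp only [hyh]; rw [if_pos h]
    · simp only [hyh]; rw [if_neg h, hvanish I hI (lt_of_not_ge h)]
  have hMy : (momentMatrix yh (t + 1)).PosSemidef := by
    have hMeq : momentMatrix yh (t + 1) = momentMatrix y (t + 1) := by
      ext I J
      show yh (I.1 ∪ J.1) = y (I.1 ∪ J.1)
      refine heq _ ?_
      have h1 := card_union_le I.1 J.1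
      have h2 := I.2
      have h3 := J.2
      omega
    rw [hMeq]
    exact hyM
  have hSy : ∀ ℓ, (momentMatrix (shiftVec (fun ℓ i => A ℓ i) b ℓ yh) t).PosSemidef := by
    intro ℓ
    have hSeq : momentMatrix (shiftVec (fun ℓ i => A ℓ i) b ℓ yh) t
        = momentMatrix (shiftVec (fun ℓ i => A ℓ i) b ℓ y) t := by
      ext I J
      show shiftVec (fun ℓ i => A ℓ i) b ℓ yh (I.1 ∪ J.1)
        = shiftVec (fun ℓ i => A ℓ i) b ℓ y (I.1 ∪ J.1)
      have hc : (I.1 ∪ J.1).card ≤ 2 * t := by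
        have h1 := card_union_le I.1 J.1
        have h2 := I.2
        have h3 := J.2
        omega
      unfold shiftVec
      congr 1
      · refine Finset.sum_congr rfl fun i _ => ?_
        congr 1
        refine heq _ ?_
        have := Finset.card_insert_le i (I.1 ∪ J.1)
        omega
      · rw [heq _ (by omega)]
    rw [hSeq]
    exact hyS ℓ
  set 𝒯 := S.powerset.filter (fun T => condVec S T yh ∅ ≠ 0) with h𝒯
  have hmem : ∀ T ∈ 𝒯, T ⊆ S ∧ T.card ≤ k ∧ condVec S T yh ∅ ≠ 0 := by
    intro T hT
    rw [h𝒯, mem_filter, mem_powerset] at hT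
    refine ⟨hT.1, ?_, hT.2⟩
    by_contra h
    exact hT.2 (condVec_zero S T yh hvanG hT.1 (lt_of_not_ge h) ∅)
  have hpsd1 : ∀ T, T ⊆ S → T.card ≤ k →
      (momentMatrix (condVec S T yh) (t - k + 1)).PosSemidef := by
    intro T hTS hTk'
    refine condVec_moment_psd S T hTS hTk' (t - k + 1) yh hvanG ?_
    have he : t - k + 1 + k = t + 1 := by omega
    rw [he]
    exact hMy
  have hpsd2 : ∀ T, T ⊆ S → T.card ≤ k → ∀ ℓ,
      (momentMatrix (shiftVec (fun ℓ i => A ℓ i) b ℓ (condVec S T yh)) (t - k)).PosSemidef := by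
    intro T hTS hTk' ℓ
    rw [condVec_shift]
    refine condVec_moment_psd S T hTS hTk' (t - k) _
      (shiftVec_vanish _ _ _ hvanG) ?_
    have he : t - k + k = t := by omega
    rw [he]
    exact hSy ℓ
  have hnn : ∀ T, T ⊆ S → T.card ≤ k → 0 ≤ condVec S T yh ∅ := by
    intro T hTS hTk'
    have h := psd_diag_nonneg (hpsd1 T hTS hTk') ⟨∅, by simp⟩
    simpa [momentMatrix] using h
  have hzero : ∀ T, T ⊆ S → T.card ≤ k → condVec S T yh ∅ = 0 →
      ∀ J : Finset (Fin n), J.card ≤ 2 * (t - k) + 2 → condVec S T yh J = 0 := by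
    intro T hTS hTk' h0 J hJ
    exact moment_vanish _ (t - k + 1) (hpsd1 T hTS hTk') h0 J (by omega)
  obtain ⟨N, hN⟩ : ∃ N, 𝒯.card = N := ⟨_, rfl⟩
  have e : {x // x ∈ 𝒯} ≃ Fin N := Finset.equivFinOfCardEq hN
  refine ⟨N, fun j => condVec S ((e.symm j).1) yh ∅,
    fun j J => (condVec S ((e.symm j).1) yh ∅)⁻¹
      * condVec S ((e.symm j).1) yh J, ?_, ?_, ?_, ?_, ?_⟩
  · intro j
    obtain ⟨hTS, hTk', hne⟩ := hmem _ (e.symm j).2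
    set T := (e.symm j).1
    have hpos : 0 < condVec S T yh ∅ := lt_of_le_of_ne (hnn T hTS hTk') (Ne.symm hne)
    have hcnn : 0 ≤ (condVec S T yh ∅)⁻¹ := inv_nonneg.2 hpos.le
    refine ⟨inv_mul_cancel₀ hne, ?_, ?_⟩
    · rw [momentMatrix_smul]
      exact psd_smul (hpsd1 T hTS hTk') hcnn
    · intro ℓ
      rw [shiftVec_smul, momentMatrix_smul]
      exact psd_smul (hpsd2 T hTS hTk' ℓ) hcnn
  · intro j i hiS
    obtain ⟨hTS, hTk', hne⟩ := hmem _ (e.symm j).2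
    set T := (e.symm j).1
    by_cases hiT : i ∈ T
    · right
      show (condVec S T yh ∅)⁻¹ * condVec S T yh {i} = 1
      rw [condVec_single_mem S T yh hiT]
      exact inv_mul_cancel₀ hne
    · left
      show (condVec S T yh ∅)⁻¹ * condVec S T yh {i} = 0
      rw [condVec_single_not_mem S T yh (mem_sdiff.2 ⟨hiS, hiT⟩), mul_zero]
  · intro j
    obtain ⟨hTS, hTk', hne⟩ := hmem _ (e.symm j).2
    exact hnn _ hTS hTk'
  · have hsum : ∀ F : Finset (Fin n) → ℝ,
        ∑ j : Fin N, F ((e.symm j).1) = ∑ T ∈ 𝒯, F T := by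
      intro F
      refine Finset.sum_bij (fun j _ => ((e.symm j).1 : Finset (Fin n))) ?_ ?_ ?_ ?_
      · exact fun j _ => (e.symm j).2
      · intro j₁ _ j₂ _ h
        exact e.symm.injective (Subtype.ext h)
      · intro T hT
        exact ⟨e ⟨T, hT⟩, Finset.mem_univ _, by simp⟩
      · exact fun j _ => rfl
    calc ∑ j, condVec S ((e.symm j).1) yh ∅
        = ∑ T ∈ 𝒯, condVec S T yh ∅ := hsum (fun T => condVec S T yh ∅)
      _ = ∑ T ∈ S.powerset, condVec S T yh ∅ := by
          refine Finset.sum_subset (Finset.filter_subset _ _) ?_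
          intro T hT hTn
          rw [h𝒯, mem_filter] at hTn
          by_contra hne
          exact hne (not_not.1 fun hzz => hTn ⟨hT, hzz⟩)
      _ = yh ∅ := condVec_sum S yh ∅
      _ = 1 := by rw [heq ∅ (by simp), hy0]
  · intro J hJ
    have hstep : ∀ T ∈ S.powerset, T ∉ 𝒯 → condVec S T yh J = 0 := by
      intro T hT hTn
      rw [h𝒯, mem_filter] at hTn
      have h0 : condVec S T yh ∅ = 0 := not_not.1 fun hzz => hTn ⟨hT, hzz⟩
      rw [mem_powerset] at hT
      by_cases hck : T.card ≤ k
      · exact hzero T hT hck h0 J hJ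
      · exact condVec_zero S T yh hvanG hT (lt_of_not_ge hck) J
    calc y J = yh J := (heq J (by omega)).symm
      _ = ∑ T ∈ S.powerset, condVec S T yh J := (condVec_sum S yh J).symm
      _ = ∑ T ∈ 𝒯, condVec S T yh J := (Finset.sum_subset (Finset.filter_subset _ _) hstep).symm
      _ = ∑ j, condVec S ((e.symm j).1) yh J := by
          refine (Finset.sum_bij (fun j _ => ((e.symm j).1 : Finset (Fin n))) ?_ ?_ ?_ ?_).symm
          · exact fun j _ => (e.symm j).2
          · intro j₁ _ j₂ _ h
            exact e.symm.injective (Subtype.ext h)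
          · intro T hT
            exact ⟨e ⟨T, hT⟩, Finset.mem_univ _, by simp⟩
          · exact fun j _ => rfl
      _ = _ := by
          refine Finset.sum_congr rfl fun j _ => ?_
          obtain ⟨hTS, hTk', hne⟩ := hmem _ (e.symm j).2
          rw [← mul_assoc, mul_inv_cancel₀ hne, one_mul]
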